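/- Let (X, μ) be a probability space, p > 0, n ≥ 1, E ≥ 1, c > 0, C > 0, and φ : X → (−∞, −1] measurable with ∫ exp(c·E^{−1/n}·|φ|^{1+p/n}) dμ ≤ C. Then for every positive integer k, log ∫ exp(−k·φ) dμ ≤ A·k^{1+n/p}·E^{1/p} + log C, where A = p·n^{n/p} / (c^{n/p}·(n+p)^{1+n/p}). -/

import Mathlib

open MeasureTheory

/-- Pointwise Young-inequality estimate. -/
theorem young_key (p : ℝ) (hp : 0 < p) (N : ℝ) (hN : 0 < N) (E c : ℝ) (hE : 0 < E) (hc : 0 < c)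
    (k t : ℝ) (hk : 0 ≤ k) (ht : 0 ≤ t) :
    k * t ≤ (p * N ^ (N/p) / (c ^ (N/p) * (N + p) ^ (1 + N/p))) * k ^ (1 + N/p) * E ^ (1/p)
      + c * E ^ (-(1:ℝ)/N) * t ^ (1 + p/N) := by
  have hq'pos : (0:ℝ) < 1 + p/N := by positivity
  have hqpos : (0:ℝ) < 1 + N/p := by positivity
  have hconj : (1 + N/p).HolderConjugate (1 + p/N) := by
    rw [Real.holderConjugate_iff]
    constructor
    · nlinarith [div_pos hN hp]
    · field_simp
      ring
  have hD : 0 < c * E ^ (-(1:ℝ)/N) := by positivity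
  set D := c * E ^ (-(1:ℝ)/N) with hDdef
  have hXpos : 0 < (1 + p/N) * D := by positivity
  set r := ((1 + p/N) * D) ^ (-(1/(1 + p/N))) with hrdef
  have hrpos : 0 < r := Real.rpow_pos_of_pos hXpos _
  have young := Real.young_inequality_of_nonneg (mul_nonneg hk hrpos.le)
    (div_nonneg ht hrpos.le) hconj
  have h1 : k * r * (t / r) = k * t := by field_simp
  rw [h1] at young
  -- second term
  have hr_q' : r ^ (1 + p/N) = ((1 + p/N) * D)⁻¹ := by
    rw [hrdef, ← Real.rpow_mul hXpos.le]
    have : -(1/(1 + p/N)) * (1 + p/N) = -1 := by field_simp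
    rw [this, Real.rpow_neg_one]
  have h2 : (t / r) ^ (1 + p/N) / (1 + p/N) = D * t ^ (1 + p/N) := by
    rw [Real.div_rpow ht hrpos.le, hr_q']
    field_simp
  -- first term
  have hqq' : -(1/(1 + p/N)) * (1 + N/p) = -(N/p) := by
    field_simp
    ring
  have hr_q : r ^ (1 + N/p) = (((1 + p/N) * D) ^ (N/p))⁻¹ := by
    rw [hrdef, ← Real.rpow_mul hXpos.le, hqq', Real.rpow_neg hXpos.le]
  have hXNp : ((1 + p/N) * D) ^ (N/p)
      = (N + p) ^ (N/p) * c ^ (N/p) * (E ^ (1/p))⁻¹ / N ^ (N/p) := by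
    have h1pN : (1 + p/N) = (N + p) / N := by field_simp
    rw [hDdef, h1pN, Real.mul_rpow (by positivity) (by positivity),
      Real.mul_rpow (by positivity) (by positivity),
      Real.div_rpow (by positivity) hN.le, ← Real.rpow_mul hE.le]
    have : -(1:ℝ)/N * (N/p) = -(1/p) := by field_simp
    rw [this, Real.rpow_neg hE.le]
    ring
  have h3 : (k * r) ^ (1 + N/p) / (1 + N/p)
      = (p * N ^ (N/p) / (c ^ (N/p) * (N + p) ^ (1 + N/p))) * k ^ (1 + N/p) * E ^ (1/p) := by
    rw [Real.mul_rpow hk hrpos.le, hr_q, hXNp]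
    have hNp1 : (N + p) ^ (1 + N/p) = (N + p) * (N + p) ^ (N/p) := by
      rw [Real.rpow_add (by positivity), Real.rpow_one]
    rw [hNp1]
    have h1Np : (1 + N/p) = (N + p) / p := by field_simp; ring
    rw [h1Np]
    have e1 : (0:ℝ) < E ^ (1/p) := by positivity
    have e2 : (0:ℝ) < N ^ (N/p) := by positivity
    have e3 : (0:ℝ) < c ^ (N/p) := by positivity
    have e4 : (0:ℝ) < (N + p) ^ (N/p) := by positivity
    field_simp
  rw [h2, h3] at young
  exact young

theorem aubin_from_moser_trudinger {X : Type*} [MeasurableSpace X]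
    (μ : Measure X) [IsProbabilityMeasure μ]
    (p : ℝ) (hp : 0 < p) (n : ℕ) (hn : 1 ≤ n)
    (E c C : ℝ) (hE : 1 ≤ E) (hc : 0 < c) (hC : 0 < C)
    (φ : X → ℝ) (hmeas : Measurable φ) (hφ : ∀ x, φ x ≤ -1)
    (hint : Integrable (fun x => Real.exp (c * E ^ (-(1:ℝ)/n) * |φ x| ^ (1 + p / n))) μ)
    (hMT : ∫ x, Real.exp (c * E ^ (-(1:ℝ)/n) * |φ x| ^ (1 + p / n)) ∂μ ≤ C) :
    ∀ k : ℕ, 0 < k →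
      Real.log (∫ x, Real.exp (-(k:ℝ) * φ x) ∂μ) ≤
        (p * (n:ℝ) ^ ((n:ℝ)/p) / (c ^ ((n:ℝ)/p) * ((n:ℝ) + p) ^ (1 + (n:ℝ)/p)))
          * (k:ℝ) ^ (1 + (n:ℝ)/p) * E ^ (1/p) + Real.log C := by
  intro k hk
  have hN : (0:ℝ) < (n:ℝ) := by exact_mod_cast Nat.lt_of_lt_of_le Nat.zero_lt_one hn
  have hE0 : (0:ℝ) < E := lt_of_lt_of_le zero_lt_one hE
  set A := p * (n:ℝ) ^ ((n:ℝ)/p) / (c ^ ((n:ℝ)/p) * ((n:ℝ) + p) ^ (1 + (n:ℝ)/p)) with hA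
  set B := A * (k:ℝ) ^ (1 + (n:ℝ)/p) * E ^ (1/p) with hB
  have hptwise : ∀ x, Real.exp (-(k:ℝ) * φ x)
      ≤ Real.exp B * Real.exp (c * E ^ (-(1:ℝ)/n) * |φ x| ^ (1 + p / n)) := by
    intro x
    rw [← Real.exp_add]
    apply Real.exp_le_exp.2
    have habs : -(k:ℝ) * φ x = (k:ℝ) * |φ x| := by
      rw [abs_of_nonpos (le_trans (hφ x) (by norm_num))]; ring
    rw [habs, hB, hA]
    exact young_key p hp (n:ℝ) hN E c hE0 hc (k:ℝ) |φ x| (Nat.cast_nonneg k) (abs_nonneg _)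
  have hint2 : Integrable (fun x => Real.exp (-(k:ℝ) * φ x)) μ := by
    apply Integrable.mono' (hint.const_mul (Real.exp B))
    · exact ((hmeas.const_mul (-(k:ℝ))).exp).aestronglyMeasurable
    · filter_upwards with x
      rw [Real.norm_eq_abs, abs_of_pos (Real.exp_pos _)]
      exact hptwise x
  have hge1 : (1:ℝ) ≤ ∫ x, Real.exp (-(k:ℝ) * φ x) ∂μ := by
    have : (1:ℝ) = ∫ _x, (1:ℝ) ∂μ := by simp
    rw [this]
    refine integral_mono (integrable_const 1) hint2 (fun x => ?_)
    rw [← Real.exp_zero]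
    apply Real.exp_le_exp.2
    have hk1 : (1:ℝ) ≤ (k:ℝ) := by exact_mod_cast hk
    nlinarith [hφ x]
  have hle : ∫ x, Real.exp (-(k:ℝ) * φ x) ∂μ ≤ Real.exp B * C := by
    calc ∫ x, Real.exp (-(k:ℝ) * φ x) ∂μ
        ≤ ∫ x, Real.exp B * Real.exp (c * E ^ (-(1:ℝ)/n) * |φ x| ^ (1 + p / n)) ∂μ :=
          integral_mono hint2 (hint.const_mul _) hptwise
      _ = Real.exp B * ∫ x, Real.exp (c * E ^ (-(1:ℝ)/n) * |φ x| ^ (1 + p / n)) ∂μ :=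
          integral_const_mul _ _
      _ ≤ Real.exp B * C := mul_le_mul_of_nonneg_left hMT (Real.exp_pos _).le
  calc Real.log (∫ x, Real.exp (-(k:ℝ) * φ x) ∂μ)
      ≤ Real.log (Real.exp B * C) := Real.log_le_log (by linarith) hle
    _ = B + Real.log C := by rw [Real.log_mul (Real.exp_ne_zero _) hC.ne', Real.log_exp]
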